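/- Let X = (X_j, X_{∼j}) be a random vector with values in ℝ × ℝ^{d−1}, let Z be a random vector in ℝ^{d−1} independent of X_j, and let r_j : ℝ × ℝ^{d−1} → ℝ^{d−1} be measurable with (X_j, r_j(X_j, Z)) identically distributed as (X_j, X_{∼j}). Let T_j : ℝ → ℝ be a measurable bijection with measurable inverse T_j^{−1}, and let T_{∼j} : ℝ^{d−1} → ℝ^N be measurable. If (Y_j, Y_{∼j}) is any random vector identically distributed as (T_j(X_j), T_{∼j}(X_{∼j})), then (Y_j, Y_{∼j}) is identically distributed as (T_j(X_j), T_{∼j}(r_j(T_j^{−1}(T_j(X_j)), Z))); that is, the map (y, z) ↦ T_{∼j}(r_j(T_j^{−1}(y), z)) is a dependency model of (Y_j, Y_{∼j}). -/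
import Mathlib


open MeasureTheory ProbabilityTheory

/-- Proposition 2(i): transformation of dependency functions.
If `r_j` is a dependency model of `(X_j, X_{∼j})` (with `Z` independent of `X_j`),
`T_j : ℝ → ℝ` is a measurable bijection with measurable inverse and `T_{∼j}` is measurable,
then any random vector `(Y_j, Y_{∼j})` identically distributed as `(T_j(X_j), T_{∼j}(X_{∼j}))`
is also identically distributed as `(T_j(X_j), T_{∼j}(r_j(T_j⁻¹(T_j(X_j)), Z)))`;
i.e. `(y, z) ↦ T_{∼j}(r_j(T_j⁻¹ y, z))` is a dependency model of `(Y_j, Y_{∼j})`.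
Here `m = d - 1`. -/
theorem dependency_model_transform {Ω Ω' : Type*} [MeasurableSpace Ω] [MeasurableSpace Ω']
    (P : Measure Ω) (P' : Measure Ω') [IsProbabilityMeasure P] [IsProbabilityMeasure P']
    (m N : ℕ)
    (Xj : Ω → ℝ) (Xnj : Ω → (Fin m → ℝ)) (Z : Ω → (Fin m → ℝ))
    (hXj : Measurable Xj) (hXnj : Measurable Xnj) (hZ : Measurable Z)
    (hindep : IndepFun Xj Z P)
    (rj : ℝ × (Fin m → ℝ) → (Fin m → ℝ)) (hrj : Measurable rj)
    (hdm : IdentDistrib (fun ω => (Xj ω, rj (Xj ω, Z ω))) (fun ω => (Xj ω, Xnj ω)) P P)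
    (Tj Tinv : ℝ → ℝ) (hTj : Measurable Tj) (hTinv : Measurable Tinv)
    (hleft : Function.LeftInverse Tinv Tj) (hright : Function.RightInverse Tinv Tj)
    (Tnj : (Fin m → ℝ) → (Fin N → ℝ)) (hTnj : Measurable Tnj)
    (Yj : Ω' → ℝ) (Ynj : Ω' → (Fin N → ℝ))
    (hY : IdentDistrib (fun ω' => (Yj ω', Ynj ω'))
      (fun ω => (Tj (Xj ω), Tnj (Xnj ω))) P' P) :
    IdentDistrib (fun ω' => (Yj ω', Ynj ω'))
      (fun ω => (Tj (Xj ω), Tnj (rj (Tinv (Tj (Xj ω)), Z ω)))) P' P := by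
  have h := hdm.comp (u := fun p : ℝ × (Fin m → ℝ) => (Tj p.1, Tnj p.2))
    ((hTj.comp measurable_fst).prodMk (hTnj.comp measurable_snd))
  simp only [hleft _] 
  exact hY.trans h.symm
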